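/- Let G ⊂ ℝ^d be open and convex and let S ⊂ G be (R,ρ)-relatively dense in G. Then there exists a set Σ ⊂ S such that: (a) B_ρ(p) ⊂ S for all p ∈ Σ and the union ⋃_{p∈Σ} B_ρ(p) is (3R,ρ)-relatively dense in G; (b) ⋃_{p∈Σ} B_{3R}(p) ⊇ closure(G); (c) for every p ∈ Σ with Σ \ {p} ≠ ∅, R ≤ dist(p, Σ \ {p}) ≤ 6R. -/
import Mathlib


open MeasureTheory Metric Set

/-- `S` is `(R,ρ)`-relatively dense in `G`: for every `x ∈ G` there is `y ∈ S`
with `B_R(x) ∩ S ⊇ B_ρ(y)`. -/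
def RelDense (d : ℕ) (R ρ : ℝ) (S G : Set (EuclideanSpace ℝ (Fin d))) : Prop :=
  ∀ x ∈ G, ∃ y ∈ S, closedBall y ρ ⊆ closedBall x R ∩ S

theorem stmt_5 (d : ℕ) (R ρ : ℝ) (hρ : 0 < ρ) (hρR : ρ ≤ R)
    (G S : Set (EuclideanSpace ℝ (Fin d)))
    (hGo : IsOpen G) (hGc : Convex ℝ G) (hSG : S ⊆ G)
    (hdense : RelDense d R ρ S G) :
    ∃ T : Set (EuclideanSpace ℝ (Fin d)), T ⊆ S ∧
      (∀ p ∈ T, closedBall p ρ ⊆ S) ∧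
      RelDense d (3 * R) ρ (⋃ p ∈ T, closedBall p ρ) G ∧
      closure G ⊆ ⋃ p ∈ T, closedBall p (3 * R) ∧
      (∀ p ∈ T, (T \ {p}).Nonempty →
        R ≤ infDist p (T \ {p}) ∧ infDist p (T \ {p}) ≤ 6 * R) := by
  have hR : 0 < R := hρ.trans_le hρR
  set C : Set (EuclideanSpace ℝ (Fin d)) := {y | closedBall y ρ ⊆ S} with hCdef
  -- Zorn: maximal R-separated subset of C
  obtain ⟨T, hTmax⟩ : ∃ T, Maximal
      (fun T => T ⊆ C ∧ T.Pairwise (fun a b => R ≤ dist a b)) T := by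
    apply zorn_subset
    intro c hc hchain
    refine ⟨⋃₀ c, ⟨?_, ?_⟩, fun t ht => subset_sUnion_of_mem ht⟩
    · exact sUnion_subset fun t ht => (hc ht).1
    · intro a ha b hb hab
      obtain ⟨t₁, ht₁, ha₁⟩ := ha
      obtain ⟨t₂, ht₂, hb₂⟩ := hb
      rcases hchain.total ht₁ ht₂ with h | h
      · exact (hc ht₂).2 (h ha₁) hb₂ hab
      · exact (hc ht₁).2 ha₁ (h hb₂) hab
  obtain ⟨⟨hTC, hTsep⟩, hmax⟩ := hTmax
  have hmemC : ∀ y ∈ C, y ∈ S := fun y hy => hy (mem_closedBall_self hρ.le)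
  have hTS : T ⊆ S := fun p hp => hmemC p (hTC hp)
  -- maximality: every element of C is within R of T
  have hnear : ∀ y ∈ C, ∃ p ∈ T, dist y p < R := by
    intro y hy
    by_contra h
    push_neg at h
    have hyT : y ∉ T := fun hyT => absurd (dist_self y ▸ h y hyT) (by simpa using hR)
    have : insert y T ⊆ T := by
      apply hmax ⟨insert_subset hy hTC, ?_⟩ (subset_insert y T)
      intro a ha b hb hab
      rcases ha with rfl | ha
      · rcases hb with rfl | hb
        · exact absurd rfl hab
        · exact h b hb
      · rcases hb with rfl | hb
        · exact dist_comm a b ▸ h a ha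
        · exact hTsep ha hb hab
    exact hyT (this (mem_insert y T))
  -- any point of G is within < 2R of T
  have hG2R : ∀ x ∈ G, ∃ p ∈ T, dist x p < 2 * R := by
    intro x hx
    obtain ⟨y, -, hy⟩ := hdense x hx
    have hyC : y ∈ C := fun z hz => (hy hz).2
    have hxy : dist x y ≤ R := by
      have := (hy (mem_closedBall_self hρ.le)).1
      simpa [dist_comm] using this
    obtain ⟨p, hp, hyp⟩ := hnear y hyC
    exact ⟨p, hp, by
      calc dist x p ≤ dist x y + dist y p := dist_triangle _ _ _
        _ < R + R := by linarith
        _ = 2 * R := by ring⟩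
  refine ⟨T, hTS, fun p hp => hTC hp, ?_, ?_, ?_⟩
  · -- relative density of union of ρ-balls
    intro x hx
    obtain ⟨p, hp, hxp⟩ := hG2R x hx
    refine ⟨p, mem_biUnion hp (mem_closedBall_self hρ.le), fun z hz => ⟨?_, ?_⟩⟩
    · have : dist z p ≤ ρ := hz
      have : dist z x ≤ dist z p + dist p x := dist_triangle _ _ _
      simp only [mem_closedBall]
      rw [dist_comm] at hxp
      linarith
    · exact mem_biUnion hp hz
  · -- closure G covered by 3R-balls
    intro x hx
    obtain ⟨x', hx'G, hxx'⟩ := Metric.mem_closure_iff.mp hx R hR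
    obtain ⟨p, hp, hx'p⟩ := hG2R x' hx'G
    refine mem_biUnion hp ?_
    have : dist x p ≤ dist x x' + dist x' p := dist_triangle _ _ _
    simp only [mem_closedBall]
    linarith
  · -- separation bounds
    intro p hp hne
    constructor
    · by_contra hlt
      push_neg at hlt
      obtain ⟨q, hq, hqlt⟩ := (infDist_lt_iff hne).mp hlt
      exact absurd (hTsep hp hq.1 (Ne.symm (by simpa using hq.2))) (not_le.mpr hqlt)
    · obtain ⟨q, hq⟩ := hne
      by_cases h6 : dist p q ≤ 6 * R
      · exact (infDist_le_dist_of_mem hq).trans h6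
      push_neg at h6
      set D := dist p q with hD
      have hD4 : (4:ℝ) * R < D := by linarith
      have hDpos : 0 < D := by linarith
      set t : ℝ := 4 * R / D with ht
      have ht0 : 0 ≤ t := by positivity
      have ht1 : t ≤ 1 := by
        rw [ht, div_le_one hDpos]; linarith
      set z : EuclideanSpace ℝ (Fin d) := (1 - t) • p + t • q with hz
      have hzG : z ∈ G := hGc (hSG (hTS hp)) (hSG (hTS hq.1)) (by linarith) ht0 (by ring)
      have hpz : dist p z = 4 * R := by
        have : p - z = t • (p - q) := by
          rw [hz]; module
        rw [dist_eq_norm, this, norm_smul, Real.norm_eq_abs, abs_of_nonneg ht0,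
          ← dist_eq_norm, ← hD, ht]
        field_simp
      obtain ⟨y, -, hy⟩ := hdense z hzG
      have hyC : y ∈ C := fun w hw => (hy hw).2
      have hzy : dist z y ≤ R := by
        have := (hy (mem_closedBall_self hρ.le)).1
        simpa [dist_comm] using this
      obtain ⟨p', hp', hyp'⟩ := hnear y hyC
      have hpp'le : dist p p' ≤ 6 * R := by
        calc dist p p' ≤ dist p z + dist z y + dist y p' := dist_triangle4 _ _ _ _
          _ ≤ 4 * R + R + R := by linarith [hpz.le, hpz.ge]
          _ = 6 * R := by ring
      have hpp'ne : p' ≠ p := by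
        intro hEq
        subst hEq
        have h1 : dist p' z ≤ dist p' y + dist y z := dist_triangle _ _ _
        rw [dist_comm] at hyp'
        rw [dist_comm] at hzy
        rw [hpz] at h1
        linarith
      refine (infDist_le_dist_of_mem ?_).trans hpp'le
      exact mem_diff_singleton.mpr ⟨hp', hpp'ne⟩
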